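/- Let d ≥ 1 be an integer and δ ∈ (0,1/2). For s ≥ 0 define Q̄(s) = ∫₀^∞ ∫₀^∞ ∫_{ℝ^{d−1}} P(t, (s+β, y)) · min(t^{−c̲}, t^{−c̄}) dy dt dβ, where (s+β, y) denotes the point of ℝ^d whose first coordinate is s+β and whose remaining coordinates are y ∈ ℝ^{d−1}. Then sup_{s ≥ 0} Q̄(s) < ∞. -/

import Mathlib

open Real MeasureTheory ENNReal

/-- The heat kernel on `ℝ × ℝ^d`, expressed as a function of the time variable `t`
and of the *squared* Euclidean norm `x2 = |x|²` of the spatial variable. -/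
noncomputable def heatKsq (d : ℕ) (t x2 : ℝ) : ℝ :=
  if 0 < t then (4 * π * t) ^ (-(d : ℝ) / 2) * Real.exp (-x2 / (4 * t)) else 0

/-- `Q̄(s) = ∫₀^∞ ∫₀^∞ ∫_{ℝ^{d-1}} P(t,(s+β,y)) min(t^{-c̲},t^{-c̄}) dy dt dβ`,
realised as a Lebesgue integral over `{(β,t,y) : β ≥ 0, t ≥ 0}`, where the point
`(s+β,y) ∈ ℝ^d` has squared norm `(s+β)² + |y|²`. -/
noncomputable def Qbar (d : ℕ) (δ : ℝ) (s : ℝ) : ℝ≥0∞ :=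
  ∫⁻ q in {q : ℝ × ℝ × EuclideanSpace ℝ (Fin (d - 1)) | 0 ≤ q.1 ∧ 0 ≤ q.2.1},
    ENNReal.ofReal
      (heatKsq d q.2.1 ((s + q.1) ^ 2 + ‖q.2.2‖ ^ 2) *
        min (q.2.1 ^ (-(1 / 2 - δ))) (q.2.1 ^ (-(((d : ℝ) + 2) / 2 + δ))))

section aux

open Set

lemma aux_integrable_rexp_gauss (n : ℕ) {b : ℝ} (hb : 0 < b) :
    Integrable (fun v : EuclideanSpace ℝ (Fin n) => rexp (-b * ‖v‖ ^ 2)) := by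
  have h := (GaussianFourier.integrable_cexp_neg_mul_sq_norm_add (b := (b : ℂ))
    (by simpa using hb) 0 (0 : EuclideanSpace ℝ (Fin n))).norm
  refine h.congr (Filter.Eventually.of_forall fun v => ?_)
  simp only [Complex.norm_exp]
  norm_num
  exact Or.inl (by rw [← Complex.ofReal_pow, Complex.ofReal_re])

lemma aux_gauss_lint_real {b : ℝ} (hb : 0 < b) :
    ∫⁻ x : ℝ, ENNReal.ofReal (rexp (-(b * x ^ 2))) = ENNReal.ofReal (Real.sqrt (π / b)) := by
  rw [← ofReal_integral_eq_lintegral_ofReal (by simpa [neg_mul] using integrable_exp_neg_mul_sq hb)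
    (Filter.Eventually.of_forall fun x => (Real.exp_pos _).le)]
  congr 1
  simpa [neg_mul] using integral_gaussian b

lemma aux_gauss_lint_euc (n : ℕ) {b : ℝ} (hb : 0 < b) :
    ∫⁻ y : EuclideanSpace ℝ (Fin n), ENNReal.ofReal (rexp (-(b * ‖y‖ ^ 2))) =
      ENNReal.ofReal ((π / b) ^ ((n : ℝ) / 2)) := by
  rw [← ofReal_integral_eq_lintegral_ofReal (by simpa [neg_mul] using aux_integrable_rexp_gauss n hb)
    (Filter.Eventually.of_forall fun x => (Real.exp_pos _).le)]
  congr 1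
  have := GaussianFourier.integral_rexp_neg_mul_sq_norm (V := EuclideanSpace ℝ (Fin n)) hb
  simpa [neg_mul, finrank_euclideanSpace_fin] using this

lemma aux_measurable_heatKsq {α : Type*} [MeasurableSpace α] (d : ℕ) {t x : α → ℝ}
    (ht : Measurable t) (hx : Measurable x) :
    Measurable fun a => heatKsq d (t a) (x a) := by
  unfold heatKsq
  refine Measurable.ite (measurableSet_lt measurable_const ht) ?_ measurable_const
  fun_prop

lemma qbar_le (d : ℕ) (hd : 1 ≤ d) (δ : ℝ) (s : ℝ) (hs : 0 ≤ s) :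
    Qbar d δ s ≤ ∫⁻ t in Ici (0 : ℝ),
      ENNReal.ofReal (min (t ^ (-(1 / 2 - δ))) (t ^ (-(((d : ℝ) + 2) / 2 + δ)))) := by
  set E := EuclideanSpace ℝ (Fin (d - 1))
  set K : ℝ → ℝ := fun t => min (t ^ (-(1 / 2 - δ))) (t ^ (-(((d : ℝ) + 2) / 2 + δ))) with hK_def
  set μ : Measure ℝ := volume.restrict (Ici 0) with hμ_def
  set f : ℝ × ℝ × E → ℝ≥0∞ := fun q =>
    ENNReal.ofReal (heatKsq d q.2.1 ((s + q.1) ^ 2 + ‖q.2.2‖ ^ 2) * K q.2.1) with hf_def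
  have hK : Measurable K := by fun_prop
  have hf : Measurable f := by
    apply Measurable.ennreal_ofReal
    exact (aux_measurable_heatKsq d (by fun_prop) (by fun_prop)).mul (by fun_prop)
  have hSet : {q : ℝ × ℝ × E | 0 ≤ q.1 ∧ 0 ≤ q.2.1} =
      (Ici (0 : ℝ)) ×ˢ ((Ici (0 : ℝ)) ×ˢ (univ : Set E)) := by
    ext q; simp [Set.mem_prod]
  have hMeas : (volume : Measure (ℝ × ℝ × E)).restrict
      ((Ici (0 : ℝ)) ×ˢ ((Ici (0 : ℝ)) ×ˢ (univ : Set E))) = μ.prod (μ.prod volume) := by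
    rw [Measure.volume_eq_prod, ← Measure.prod_restrict, Measure.volume_eq_prod, ← Measure.prod_restrict,
      Measure.restrict_univ]
  have key : ∀ t : ℝ, (∫⁻ y : E, ∫⁻ β, f (β, (t, y)) ∂μ) ≤ ENNReal.ofReal (K t) := by
    intro t
    by_cases ht : 0 < t
    · have hb : (0 : ℝ) < 1 / (4 * t) := by positivity
      set b : ℝ := 1 / (4 * t) with hb_def
      set A : ℝ := (4 * π * t) ^ (-(d : ℝ) / 2) with hA_def
      have hA : 0 < A := rpow_pos_of_pos (by positivity) _
      have hKt : 0 ≤ K t :=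
        le_min (Real.rpow_nonneg ht.le _) (Real.rpow_nonneg ht.le _)
      have hexp : ∀ X Y : ℝ, rexp (-(X + Y) / (4 * t)) = rexp (-(b * X)) * rexp (-(b * Y)) := by
        intro X Y
        rw [← Real.exp_add]
        congr 1
        rw [hb_def]
        field_simp
        ring
      have hβ : ∀ y : E, (∫⁻ β, f (β, (t, y)) ∂μ) ≤
          ENNReal.ofReal (A * K t * Real.sqrt (π / b)) * ENNReal.ofReal (rexp (-(b * ‖y‖ ^ 2))) := by
        intro y
        have hpt : ∀ β : ℝ, f (β, (t, y)) =
            ENNReal.ofReal (A * K t * rexp (-(b * ‖y‖ ^ 2))) *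
              ENNReal.ofReal (rexp (-(b * (s + β) ^ 2))) := by
          intro β
          rw [hf_def]
          simp only [heatKsq, if_pos ht]
          rw [← ENNReal.ofReal_mul (by positivity)]
          congr 1
          rw [hexp]
          ring
        calc (∫⁻ β, f (β, (t, y)) ∂μ)
            = ENNReal.ofReal (A * K t * rexp (-(b * ‖y‖ ^ 2))) *
                ∫⁻ β, ENNReal.ofReal (rexp (-(b * (s + β) ^ 2))) ∂μ := by
              rw [← lintegral_const_mul _ (by fun_prop)]
              exact lintegral_congr hpt
          _ ≤ ENNReal.ofReal (A * K t * rexp (-(b * ‖y‖ ^ 2))) *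
                ENNReal.ofReal (Real.sqrt (π / b)) := by
              gcongr
              calc (∫⁻ β, ENNReal.ofReal (rexp (-(b * (s + β) ^ 2))) ∂μ)
                  ≤ ∫⁻ β, ENNReal.ofReal (rexp (-(b * β ^ 2))) ∂μ := by
                    refine setLIntegral_mono (by fun_prop) fun β hβ0 => ?_
                    refine ENNReal.ofReal_le_ofReal (Real.exp_le_exp.2 ?_)
                    have hβ0' : (0 : ℝ) ≤ β := hβ0
                    nlinarith [sq_nonneg s, mul_nonneg hs hβ0', hb.le]
                _ ≤ ∫⁻ β, ENNReal.ofReal (rexp (-(b * β ^ 2))) := by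
                    exact lintegral_mono' Measure.restrict_le_self le_rfl
                _ = ENNReal.ofReal (Real.sqrt (π / b)) := aux_gauss_lint_real hb
          _ = ENNReal.ofReal (A * K t * Real.sqrt (π / b)) *
                ENNReal.ofReal (rexp (-(b * ‖y‖ ^ 2))) := by
              rw [← ENNReal.ofReal_mul (by positivity), ← ENNReal.ofReal_mul (by positivity)]
              congr 1
              ring
      have hone : A * Real.sqrt (π / b) * (π / b) ^ (((d - 1 : ℕ) : ℝ) / 2) = 1 := by
        have hπb : π / b = 4 * π * t := by
          rw [hb_def]; field_simp
        have h4 : (0 : ℝ) < 4 * π * t := by positivity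
        have hcast : ((d - 1 : ℕ) : ℝ) = (d : ℝ) - 1 := by
          push_cast [Nat.cast_sub hd]; ring
        rw [hπb, hcast, hA_def, Real.sqrt_eq_rpow, ← Real.rpow_add h4, ← Real.rpow_add h4]
        rw [show -(d : ℝ) / 2 + 1 / 2 + ((d : ℝ) - 1) / 2 = 0 by ring, Real.rpow_zero]
      calc (∫⁻ y : E, ∫⁻ β, f (β, (t, y)) ∂μ)
          ≤ ∫⁻ y : E, ENNReal.ofReal (A * K t * Real.sqrt (π / b)) *
              ENNReal.ofReal (rexp (-(b * ‖y‖ ^ 2))) := lintegral_mono hβ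
        _ = ENNReal.ofReal (A * K t * Real.sqrt (π / b)) *
              ∫⁻ y : E, ENNReal.ofReal (rexp (-(b * ‖y‖ ^ 2))) :=
            lintegral_const_mul _ (by fun_prop)
        _ = ENNReal.ofReal (A * K t * Real.sqrt (π / b)) *
              ENNReal.ofReal ((π / b) ^ (((d - 1 : ℕ) : ℝ) / 2)) := by
            rw [aux_gauss_lint_euc _ hb]
        _ = ENNReal.ofReal (K t) := by
            rw [← ENNReal.ofReal_mul (by positivity)]
            congr 1
            calc A * K t * Real.sqrt (π / b) * (π / b) ^ (((d - 1 : ℕ) : ℝ) / 2)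
                = A * Real.sqrt (π / b) * (π / b) ^ (((d - 1 : ℕ) : ℝ) / 2) * K t := by ring
              _ = K t := by rw [hone, one_mul]
    · have hzero : ∀ β : ℝ, ∀ y : E, f (β, (t, y)) = 0 := by
        intro β y
        rw [hf_def]
        simp only [heatKsq, if_neg ht, zero_mul, ENNReal.ofReal_zero]
      simp only [hzero, lintegral_zero]
      exact zero_le
  calc Qbar d δ s
      = ∫⁻ q, f q ∂(μ.prod (μ.prod volume)) := by
        rw [Qbar, hSet, hMeas]
    _ = ∫⁻ β, ∫⁻ p, f (β, p) ∂(μ.prod volume) ∂μ := lintegral_prod f hf.aemeasurable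
    _ = ∫⁻ p, ∫⁻ β, f (β, p) ∂μ ∂(μ.prod volume) :=
        lintegral_lintegral_swap hf.aemeasurable
    _ = ∫⁻ t, (∫⁻ y : E, ∫⁻ β, f (β, (t, y)) ∂μ) ∂μ :=
        lintegral_prod _ ((Measurable.lintegral_prod_left (f := fun β p => f (β, p)) (by exact hf)).aemeasurable)
    _ ≤ ∫⁻ t, ENNReal.ofReal (K t) ∂μ := lintegral_mono key
    _ = ∫⁻ t in Ici (0 : ℝ),
          ENNReal.ofReal (min (t ^ (-(1 / 2 - δ))) (t ^ (-(((d : ℝ) + 2) / 2 + δ)))) := rfl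

lemma aux_I_lt_top (d : ℕ) (hd : 1 ≤ d) (δ : ℝ) (hδ : δ ∈ Set.Ioo (0 : ℝ) (1 / 2)) :
    (∫⁻ t in Ici (0 : ℝ),
      ENNReal.ofReal (min (t ^ (-(1 / 2 - δ))) (t ^ (-(((d : ℝ) + 2) / 2 + δ))))) < ⊤ := by
  rw [← setLIntegral_congr (Ioi_ae_eq_Ici (a := (0 : ℝ))),
    ← Set.Ioc_union_Ioi_eq_Ioi (zero_le_one (α := ℝ)),
    lintegral_union measurableSet_Ioi (Set.Ioc_disjoint_Ioi le_rfl)]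
  refine ENNReal.add_lt_top.mpr ⟨?_, ?_⟩
  · calc (∫⁻ t in Set.Ioc (0 : ℝ) 1,
        ENNReal.ofReal (min (t ^ (-(1 / 2 - δ))) (t ^ (-(((d : ℝ) + 2) / 2 + δ)))))
        ≤ ∫⁻ t in Set.Ioc (0 : ℝ) 1, ENNReal.ofReal (t ^ (-(1 / 2 - δ))) :=
          setLIntegral_mono (by fun_prop) fun t _ =>
            ENNReal.ofReal_le_ofReal (min_le_left _ _)
      _ = ∫⁻ t in Set.Ioo (0 : ℝ) 1, ENNReal.ofReal (t ^ (-(1 / 2 - δ))) :=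
          (setLIntegral_congr (Ioo_ae_eq_Ioc (μ := volume) (a := (0:ℝ)) (b := (1:ℝ)))).symm
      _ < ⊤ := by
          refine IntegrableOn.setLIntegral_lt_top ?_
          rw [intervalIntegral.integrableOn_Ioo_rpow_iff one_pos]
          have := hδ.1
          linarith
  · calc (∫⁻ t in Set.Ioi (1 : ℝ),
        ENNReal.ofReal (min (t ^ (-(1 / 2 - δ))) (t ^ (-(((d : ℝ) + 2) / 2 + δ)))))
        ≤ ∫⁻ t in Set.Ioi (1 : ℝ), ENNReal.ofReal (t ^ (-(((d : ℝ) + 2) / 2 + δ))) :=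
          setLIntegral_mono (by fun_prop) fun t _ =>
            ENNReal.ofReal_le_ofReal (min_le_right _ _)
      _ < ⊤ := by
          refine IntegrableOn.setLIntegral_lt_top ?_
          refine integrableOn_Ioi_rpow_of_lt ?_ one_pos
          have h1 : (1 : ℝ) ≤ (d : ℝ) := by exact_mod_cast hd
          have := hδ.1
          linarith

end aux

theorem stmt14 (d : ℕ) (hd : 1 ≤ d) (δ : ℝ) (hδ : δ ∈ Set.Ioo (0 : ℝ) (1 / 2)) :
    (⨆ (s : ℝ) (_ : 0 ≤ s), Qbar d δ s) < ⊤ := by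
  refine lt_of_le_of_lt ?_ (aux_I_lt_top d hd δ hδ)
  exact iSup_le fun s => iSup_le fun hs => qbar_le d hd δ s hs
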